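/- Let B be an ideal of a finite-dimensional dialgebra A, and let U be a subalgebra of A minimal with respect to the property A = B + U. Then B ∩ U ⊆ φ(U). -/
import Mathlib


/-!  Framework: dialgebras and Poisson algebras as bilinear structures on a module. -/

variable {F P : Type*} [Field F] [AddCommGroup P] [Module F P]

/-- A dialgebra: a vector space with two bilinear multiplications. -/
structure Dialgebra (F P : Type*) [Field F] [AddCommGroup P] [Module F P] where
  mul : P →ₗ[F] P →ₗ[F] P
  bracket : P →ₗ[F] P →ₗ[F] P

namespace Dialgebra

variable (D : Dialgebra F P)

/-- Span of the set of products `a·b`, `a ∈ A`, `b ∈ B`. -/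
def pmul (A B : Submodule F P) : Submodule F P :=
  Submodule.span F (Set.image2 (fun a b => D.mul a b) (A : Set P) (B : Set P))

/-- Span of the set of brackets `[a,b]`, `a ∈ A`, `b ∈ B`. -/
def pbra (A B : Submodule F P) : Submodule F P :=
  Submodule.span F (Set.image2 (fun a b => D.bracket a b) (A : Set P) (B : Set P))

/-- `A·B + [A,B]`. -/
def psq (A B : Submodule F P) : Submodule F P := D.pmul A B ⊔ D.pbra A B

/-- A subalgebra: a subspace closed under both products. -/
def IsSubalgebra (A : Submodule F P) : Prop := D.psq A A ≤ A

/-- An ideal of the dialgebra. -/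
def IsIdeal (A : Submodule F P) : Prop :=
  D.pmul A ⊤ ≤ A ∧ D.pmul ⊤ A ≤ A ∧ D.pbra A ⊤ ≤ A ∧ D.pbra ⊤ A ≤ A

/-- `A` is an ideal of the subalgebra `U`. -/
def IsIdealIn (A U : Submodule F P) : Prop :=
  A ≤ U ∧ D.pmul A U ≤ A ∧ D.pmul U A ≤ A ∧ D.pbra A U ≤ A ∧ D.pbra U A ≤ A

/-- Lower central series of `B`: `B^1 = B`, `B^{n+1} = B^n·B + [B^n,B]`. -/
def lcs (B : Submodule F P) : ℕ → Submodule F P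
  | 0 => B
  | n + 1 => D.psq (lcs B n) B

/-- `B` is nilpotent as a dialgebra. -/
def IsNilpotentSub (B : Submodule F P) : Prop := ∃ n, D.lcs B n = ⊥

/-- Derived series of `B`. -/
def ders (B : Submodule F P) : ℕ → Submodule F P
  | 0 => B
  | n + 1 => D.psq (ders B n) (ders B n)

/-- `B` is solvable as a dialgebra. -/
def IsSolvableSub (B : Submodule F P) : Prop := ∃ n, D.ders B n = ⊥

/-- Associative powers: `apow B n = B_A^{n+1}`, i.e. `apow B 0 = B_A^1 = B`. -/
def apow (B : Submodule F P) : ℕ → Submodule F P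
  | 0 => B
  | n + 1 => D.pmul (apow B n) B

/-- Lie powers: `lpow B n = B_L^{n+1}`. -/
def lpow (B : Submodule F P) : ℕ → Submodule F P
  | 0 => B
  | n + 1 => D.pbra (lpow B n) B

/-- Associative nilpotency of `B`. -/
def AssocNilpotent (B : Submodule F P) : Prop := ∃ n, D.apow B n = ⊥

/-- Lie nilpotency of `B`. -/
def LieNilpotent (B : Submodule F P) : Prop := ∃ n, D.lpow B n = ⊥

/-- `mulPows B X n = X·B_A^n` (with the convention that it is `X` for `n = 0`). -/
def mulPows (B X : Submodule F P) : ℕ → Submodule F P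
  | 0 => X
  | n + 1 => D.pmul (mulPows B X n) B

/-- `M` is a maximal (proper) subalgebra of the subalgebra `U`. -/
def IsMaximalSubalgebraIn (U M : Submodule F P) : Prop :=
  D.IsSubalgebra M ∧ M < U ∧ ∀ K, D.IsSubalgebra K → M ≤ K → K ≤ U → K = M ∨ K = U

/-- Frattini subalgebra of the subalgebra `U`: intersection of its maximal subalgebras. -/
def frattiniIn (U : Submodule F P) : Submodule F P :=
  U ⊓ sInf {M | D.IsMaximalSubalgebraIn U M}

/-- Frattini ideal of the subalgebra `U`: largest ideal of `U` inside `frattiniIn U`. -/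
def phiIn (U : Submodule F P) : Submodule F P :=
  sSup {I | D.IsIdealIn I U ∧ I ≤ D.frattiniIn U}

/-- Frattini subalgebra of the dialgebra. -/
def frattini : Submodule F P := D.frattiniIn ⊤

/-- Frattini ideal of the dialgebra. -/
def phi : Submodule F P := sSup {I | D.IsIdeal I ∧ I ≤ D.frattini}

/-- Minimal ideal. -/
def IsMinimalIdeal (A : Submodule F P) : Prop :=
  D.IsIdeal A ∧ A ≠ ⊥ ∧ ∀ I, D.IsIdeal I → I ≤ A → I = ⊥ ∨ I = A

/-- Zero (trivial-multiplication) subspace. -/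
def IsZeroAlg (A : Submodule F P) : Prop := D.pmul A A = ⊥ ∧ D.pbra A A = ⊥

/-- Zero socle: sum of the minimal zero ideals. -/
def zsoc : Submodule F P := sSup {A | D.IsMinimalIdeal A ∧ D.IsZeroAlg A}

/-- Socle: sum of the minimal ideals. -/
def soc : Submodule F P := sSup {A | D.IsMinimalIdeal A}

/-- Annihilator of `B` in the algebra. -/
def annih (B : Submodule F P) : Submodule F P where
  carrier := {x | ∀ b ∈ B, D.mul x b = 0 ∧ D.bracket x b = 0}
  add_mem' := by
    intro x y hx hy b hb
    have h1 := hx b hb; have h2 := hy b hb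
    constructor <;> simp [map_add, LinearMap.add_apply, h1.1, h1.2, h2.1, h2.2]
  zero_mem' := by intro b hb; simp
  smul_mem' := by
    intro c x hx b hb
    have h := hx b hb
    constructor <;> simp [map_smul, LinearMap.smul_apply, h.1, h.2]

/-- `R` is the solvable radical: the largest solvable ideal. -/
def IsRadical (R : Submodule F P) : Prop :=
  D.IsIdeal R ∧ D.IsSolvableSub R ∧ ∀ I, D.IsIdeal I → D.IsSolvableSub I → I ≤ R

/-- `N` is the nilradical: the largest nilpotent ideal. -/
def IsNilradical (N : Submodule F P) : Prop :=
  D.IsIdeal N ∧ D.IsNilpotentSub N ∧ ∀ I, D.IsIdeal I → D.IsNilpotentSub I → I ≤ N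

end Dialgebra

/-- A Poisson algebra: commutative associative product and Lie bracket linked by the Leibniz rule. -/
structure PoissonAlgebra (F P : Type*) [Field F] [AddCommGroup P] [Module F P]
    extends Dialgebra F P where
  mul_comm : ∀ x y, mul x y = mul y x
  mul_assoc : ∀ x y z, mul (mul x y) z = mul x (mul y z)
  lie_self : ∀ x, bracket x x = 0
  leibniz_lie : ∀ x y z, bracket x (bracket y z) = bracket (bracket x y) z + bracket y (bracket x z)
  leibniz : ∀ x y z, bracket (mul x y) z = mul (bracket x z) y + mul x (bracket y z)
namespace Dialgebra

variable (D : Dialgebra F P)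

lemma pmul_le_iff {A B X : Submodule F P} :
    D.pmul A B ≤ X ↔ ∀ a ∈ A, ∀ b ∈ B, D.mul a b ∈ X := by
  rw [pmul, Submodule.span_le, Set.image2_subset_iff]
  rfl

lemma pbra_le_iff {A B X : Submodule F P} :
    D.pbra A B ≤ X ↔ ∀ a ∈ A, ∀ b ∈ B, D.bracket a b ∈ X := by
  rw [pbra, Submodule.span_le, Set.image2_subset_iff]
  rfl

lemma mul_mem_pmul {A B : Submodule F P} {a b : P} (ha : a ∈ A) (hb : b ∈ B) :
    D.mul a b ∈ D.pmul A B :=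
  Submodule.subset_span (Set.mem_image2_of_mem ha hb)

lemma bra_mem_pbra {A B : Submodule F P} {a b : P} (ha : a ∈ A) (hb : b ∈ B) :
    D.bracket a b ∈ D.pbra A B :=
  Submodule.subset_span (Set.mem_image2_of_mem ha hb)

end Dialgebra

/-- If `U` is minimal among subalgebras with `A = B + U` (`B` an ideal), then
`B ∩ U ⊆ φ(U)`. -/
theorem inf_le_phi_of_minimal_supplement {F P : Type*} [Field F] [AddCommGroup P] [Module F P]
    [FiniteDimensional F P] (D : Dialgebra F P) (B U : Submodule F P)
    (hB : D.IsIdeal B) (hU : D.IsSubalgebra U) (hBU : B ⊔ U = ⊤)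
    (hmin : ∀ U', D.IsSubalgebra U' → U' ≤ U → B ⊔ U' = ⊤ → U' = U) :
    B ⊓ U ≤ D.phiIn U := by
  have hUm : D.pmul U U ≤ U := le_trans le_sup_left hU
  have hUb : D.pbra U U ≤ U := le_trans le_sup_right hU
  -- B ⊓ U is an ideal of U
  have hid : D.IsIdealIn (B ⊓ U) U := by
    refine ⟨inf_le_right, ?_, ?_, ?_, ?_⟩
    · rw [Dialgebra.pmul_le_iff]
      intro a ha b hb
      exact ⟨hB.1 (D.mul_mem_pmul ha.1 (Submodule.mem_top)),
        hUm (D.mul_mem_pmul ha.2 hb)⟩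
    · rw [Dialgebra.pmul_le_iff]
      intro a ha b hb
      exact ⟨hB.2.1 (D.mul_mem_pmul (Submodule.mem_top) hb.1),
        hUm (D.mul_mem_pmul ha hb.2)⟩
    · rw [Dialgebra.pbra_le_iff]
      intro a ha b hb
      exact ⟨hB.2.2.1 (D.bra_mem_pbra ha.1 (Submodule.mem_top)),
        hUb (D.bra_mem_pbra ha.2 hb)⟩
    · rw [Dialgebra.pbra_le_iff]
      intro a ha b hb
      exact ⟨hB.2.2.2 (D.bra_mem_pbra (Submodule.mem_top) hb.1),
        hUb (D.bra_mem_pbra ha hb.2)⟩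
  -- B ⊓ U is contained in every maximal subalgebra of U
  have hfr : B ⊓ U ≤ D.frattiniIn U := by
    refine le_inf inf_le_right (le_sInf ?_)
    intro M hM
    by_contra hnle
    set K := M ⊔ (B ⊓ U) with hK
    have hKU : K ≤ U := sup_le hM.2.1.le inf_le_right
    have hMU : M ≤ U := hM.2.1.le
    -- K is a subalgebra
    have hKsub : D.IsSubalgebra K := by
      have key : ∀ x ∈ K, ∀ y ∈ K, D.mul x y ∈ K ∧ D.bracket x y ∈ K := by
        intro x hx y hy
        rcases Submodule.mem_sup.1 hx with ⟨m, hm, i, hi, rfl⟩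
        rcases Submodule.mem_sup.1 hy with ⟨m', hm', i', hi', rfl⟩
        constructor
        · have : D.mul (m + i) (m' + i')
              = D.mul m m' + (D.mul m i' + D.mul i m' + D.mul i i') := by
            simp [map_add]; abel
          rw [this]
          refine add_mem (Submodule.mem_sup_left
            (hM.1 (le_sup_left (α := Submodule F P) (D.mul_mem_pmul hm hm')))) ?_
          refine Submodule.mem_sup_right (add_mem (add_mem ?_ ?_) ?_)
          · exact hid.2.2.1 (D.mul_mem_pmul (hMU hm) hi')
          · exact hid.2.1 (D.mul_mem_pmul hi (hMU hm'))
          · exact hid.2.1 (D.mul_mem_pmul hi hi'.2)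
        · have : D.bracket (m + i) (m' + i')
              = D.bracket m m' + (D.bracket m i' + D.bracket i m' + D.bracket i i') := by
            simp [map_add]; abel
          rw [this]
          refine add_mem (Submodule.mem_sup_left
            (hM.1 (le_sup_right (α := Submodule F P) (D.bra_mem_pbra hm hm')))) ?_
          refine Submodule.mem_sup_right (add_mem (add_mem ?_ ?_) ?_)
          · exact hid.2.2.2.2 (D.bra_mem_pbra (hMU hm) hi')
          · exact hid.2.2.2.1 (D.bra_mem_pbra hi (hMU hm'))
          · exact hid.2.2.2.1 (D.bra_mem_pbra hi hi'.2)
      refine sup_le ?_ ?_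
      · rw [Dialgebra.pmul_le_iff]
        intro a ha b hb; exact (key a ha b hb).1
      · rw [Dialgebra.pbra_le_iff]
        intro a ha b hb; exact (key a ha b hb).2
    have hKM : K ≠ M := by
      intro h
      exact hnle (h ▸ le_sup_right)
    rcases hM.2.2 K hKsub le_sup_left hKU with h | h
    · exact hKM h
    · -- K = U, so B ⊔ M = ⊤, contradicting minimality
      have hBM : B ⊔ M = ⊤ := by
        apply le_antisymm le_top
        rw [← hBU, ← h, hK]
        refine sup_le le_sup_left (sup_le le_sup_right ?_)
        exact le_trans inf_le_left le_sup_left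
      have := hmin M hM.1 hMU hBM
      exact (lt_irrefl U (this ▸ hM.2.1)).elim
  exact le_sSup ⟨hid, hfr⟩
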